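/- Let N ≥ 1, R ≥ 1 and k ≥ 2, and let Φ : (Perm(Fin N))^R → (Fin N × (Fin R)^k → Fin N) be the k-hop evaluation map defined by Φ(g)(s, w) = g_w(s). Then every fiber of Φ has cardinality at most N!; that is, for every function O : Fin N × (Fin R)^k → Fin N, the number of tuples g with Φ(g) = O is at most N!. -/

import Mathlib

/-- For a tuple of permutations `g : Fin R → Perm (Fin N)` and a word
`w = (w_1, …, w_k) ∈ (Fin R)^k`, `wordComp g w` is the composition
`g_{w_k} ∘ ⋯ ∘ g_{w_1}` (with `g_{w_1}` applied first). -/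
def wordComp {N R : ℕ} (g : Fin R → Equiv.Perm (Fin N)) {k : ℕ}
    (w : Fin k → Fin R) : Equiv.Perm (Fin N) :=
  (List.ofFn w).foldl (fun σ r => g r * σ) 1

/-- The `k`-hop evaluation map `Φ`, sending a tuple of permutations `g` to the
function `(s, w) ↦ g_w(s)`. -/
def khopEval (N R k : ℕ) (g : Fin R → Equiv.Perm (Fin N)) :
    Fin N × (Fin k → Fin R) → Fin N :=
  fun p => wordComp g p.2 p.1

lemma foldl_congr_aux {N R : ℕ} (g g' : Fin R → Equiv.Perm (Fin N)) :
    ∀ (l : List (Fin R)) (σ : Equiv.Perm (Fin N)), (∀ r ∈ l, g r = g' r) →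
      l.foldl (fun σ r => g r * σ) σ = l.foldl (fun σ r => g' r * σ) σ
  | [], σ, _ => rfl
  | (a :: l), σ, h => by
      simp only [List.foldl_cons]
      rw [h a (List.mem_cons_self)]
      exact foldl_congr_aux g g' l _ (fun r hr => h r (List.mem_cons_of_mem _ hr))

lemma wordComp_congr {N R k : ℕ} (g g' : Fin R → Equiv.Perm (Fin N))
    (w : Fin k → Fin R) (h : ∀ i, g (w i) = g' (w i)) :
    wordComp g w = wordComp g' w := by
  apply foldl_congr_aux
  intro r hr
  obtain ⟨i, rfl⟩ := List.mem_ofFn.mp hr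
  exact h i

lemma wordComp_succ {N R m : ℕ} (g : Fin R → Equiv.Perm (Fin N))
    (w : Fin (m + 1) → Fin R) :
    wordComp g w = g (w (Fin.last m)) * wordComp g (fun i => w i.castSucc) := by
  unfold wordComp
  rw [List.ofFn_succ', List.concat_eq_append, List.foldl_append]
  rfl

/-- **Fibers of the k-hop evaluation map are small.** For `N, R ≥ 1` and
`k ≥ 2`, every fiber of `Φ` has cardinality at most `N!`. -/
theorem khopEval_fiber_card_le (N R k : ℕ) (hN : 1 ≤ N) (hR : 1 ≤ R)
    (hk : 2 ≤ k) (O : Fin N × (Fin k → Fin R) → Fin N) :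
    Nat.card {g : Fin R → Equiv.Perm (Fin N) // khopEval N R k g = O}
      ≤ Nat.factorial N := by
  obtain ⟨m, rfl⟩ : ∃ m, k = m + 1 := ⟨k - 1, by omega⟩
  set z : Fin R := ⟨0, hR⟩
  have hcard : Nat.factorial N = Nat.card (Equiv.Perm (Fin N)) := by
    rw [Nat.card_eq_fintype_card, Fintype.card_perm, Fintype.card_fin]
  rw [hcard]
  apply Nat.card_le_card_of_injective (fun g => g.1 z)
  rintro ⟨g, hg⟩ ⟨g', hg'⟩ h
  simp only at h
  have key : ∀ r : Fin R, g r = g' r := by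
    intro r
    set w : Fin (m + 1) → Fin R := fun i => if i = Fin.last m then r else z with hw
    have hweq : wordComp g w = wordComp g' w := by
      refine Equiv.ext fun s => ?_
      have h1 := congrFun hg (s, w)
      have h2 := congrFun hg' (s, w)
      exact h1.trans h2.symm
    have hC : wordComp g (fun i : Fin m => w i.castSucc)
        = wordComp g' (fun i : Fin m => w i.castSucc) := by
      apply wordComp_congr
      intro i
      have : w i.castSucc = z := by
        simp [hw, (Fin.castSucc_lt_last i).ne]
      rw [this, h]
    have hwl : w (Fin.last m) = r := by simp [hw]
    rw [wordComp_succ, wordComp_succ, hwl, hC] at hweq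
    exact mul_right_cancel hweq
  exact Subtype.ext (funext key)
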